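/- For any matrix A ∈ ℝ^{n×m} and index sets I (rows) and J (columns), the CUR approximation error satisfies ‖A − A(:,J)A(:,J)† A A(I,:)† A(I,:)‖ ≤ ‖A − A(:,J)A(:,J)† A‖ + ‖A − A A(I,:)† A(I,:)‖ in the spectral norm. -/

import Mathlib

open Matrix

noncomputable def specNorm {m n : Type*} [Fintype m] [Fintype n] [DecidableEq n]
    (A : Matrix m n ℝ) : ℝ :=
  ‖LinearMap.toContinuousLinearMap (Matrix.toEuclideanLin A)‖

noncomputable def sMin {m n : Type*} [Fintype m] [Fintype n] [DecidableEq n]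
    (A : Matrix m n ℝ) : ℝ :=
  Real.sqrt (⨅ i, ((show (Aᵀ * A).IsHermitian by simpa [Matrix.conjTranspose_eq_transpose_of_trivial] using Matrix.isHermitian_conjTranspose_mul_self A)).eigenvalues i)

noncomputable def singVals {m n : ℕ} (A : Matrix (Fin m) (Fin n) ℝ) : Fin n → ℝ :=
  fun i =>
    Real.sqrt (((show (Aᵀ * A).IsHermitian by simpa [Matrix.conjTranspose_eq_transpose_of_trivial] using Matrix.isHermitian_conjTranspose_mul_self A)).eigenvalues
      (Tuple.sort ((show (Aᵀ * A).IsHermitian by simpa [Matrix.conjTranspose_eq_transpose_of_trivial] using Matrix.isHermitian_conjTranspose_mul_self A)).eigenvalues i.rev))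

noncomputable def pinv {m n : Type*} [Fintype m] [Fintype n] (A : Matrix m n ℝ) : Matrix n m ℝ :=
  open Classical in
  if h : ∃ B : Matrix n m ℝ,
      A * B * A = A ∧ B * A * B = B ∧ (A * B)ᵀ = A * B ∧ (B * A)ᵀ = B * A
  then h.choose else 0

open scoped Matrix.Norms.L2Operator

lemma specNorm_eq_norm {m n : Type*} [Fintype m] [Fintype n] [DecidableEq n]
    (A : Matrix m n ℝ) : specNorm A = ‖A‖ := rfl

lemma proj_norm_le_one {n : Type*} [Fintype n] [DecidableEq n] (Q : Matrix n n ℝ)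
    (h1 : Qᵀ = Q) (h2 : Q * Q = Q) : ‖Q‖ ≤ 1 := by
  have h := Matrix.l2_opNorm_conjTranspose_mul_self Q
  have hct : Qᴴ = Q := by
    rw [conjTranspose_eq_transpose_of_trivial]; exact h1
  rw [hct, h2] at h
  nlinarith [norm_nonneg Q]

theorem cur_error_le_col_add_row {n m p q : ℕ} (A : Matrix (Fin n) (Fin m) ℝ)
    (I : Fin p → Fin n) (J : Fin q → Fin m) :
    specNorm (A - A.submatrix id J * pinv (A.submatrix id J) * A *
        pinv (A.submatrix I id) * A.submatrix I id) ≤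
      specNorm (A - A.submatrix id J * pinv (A.submatrix id J) * A) +
        specNorm (A - A * pinv (A.submatrix I id) * A.submatrix I id) := by
  classical
  set C : Matrix (Fin n) (Fin q) ℝ := A.submatrix id J with hC
  set R : Matrix (Fin p) (Fin m) ℝ := A.submatrix I id with hR
  by_cases h : ∃ B : Matrix (Fin m) (Fin p) ℝ,
      R * B * R = R ∧ B * R * B = B ∧ (R * B)ᵀ = R * B ∧ (B * R)ᵀ = B * R
  · have hpinv : pinv R = h.choose := by rw [pinv, dif_pos h]
    obtain ⟨hRBR, hBRB, hsym1, hsym2⟩ := h.choose_spec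
    set Q : Matrix (Fin m) (Fin m) ℝ := pinv R * R with hQ
    have hQt : Qᵀ = Q := by rw [hQ, hpinv]; exact hsym2
    have hQQ : Q * Q = Q := by
      rw [hQ, hpinv]
      calc h.choose * R * (h.choose * R) = h.choose * R * h.choose * R := by
            rw [Matrix.mul_assoc (h.choose * R)]
        _ = h.choose * R := by rw [hBRB]
    have key : A - C * pinv C * A * pinv R * R
        = (A - A * pinv R * R) + (A - C * pinv C * A) * (pinv R * R) := by
      simp only [Matrix.sub_mul, Matrix.mul_assoc]
      abel
    rw [specNorm_eq_norm, specNorm_eq_norm, specNorm_eq_norm, key]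
    have h1 := norm_add_le (A - A * pinv R * R) ((A - C * pinv C * A) * (pinv R * R))
    have h2 := Matrix.l2_opNorm_mul (A - C * pinv C * A) (pinv R * R)
    have h3 : ‖(pinv R * R : Matrix (Fin m) (Fin m) ℝ)‖ ≤ 1 := proj_norm_le_one _ hQt hQQ
    have h4 : (0:ℝ) ≤ ‖A - C * pinv C * A‖ := norm_nonneg _
    nlinarith
  · have hpinv : pinv R = 0 := by rw [pinv, dif_neg h]
    rw [hpinv]
    simp only [Matrix.mul_zero, Matrix.zero_mul, sub_zero]
    simp only [specNorm_eq_norm]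
    have := norm_nonneg (A - C * pinv C * A)
    linarith
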